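/- arXiv:2209.14863 — 2 statements merged into one kernel-verified Lean document; each statement's English description precedes it below -/
import Mathlib

section
/- Let σ_ι(z) = (1/ι)·log(1 + exp(ι z)) be the softplus approximation of ReLU with parameter ι > 0. If z ~ N(b, w²) with w > 0 and b ≠ 0, then for all sufficiently large ι, E[σ_ι''(z)·1_{z ≥ 0}] ≤ (1/|b|)·√(2/(eπ)). -/
open MeasureTheory ProbabilityTheory Real
open scoped NNReal ENNReal

/-- For the softplus `σ_ι(z) = (1/ι) log(1+exp(ιz))`, whose second derivative is
`σ_ι''(z) = ι e^{ιz}/(1+e^{ιz})²`, if `z ~ N(b, w²)` with `w > 0` and `b ≠ 0`, then for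
all sufficiently large `ι`, `E[σ_ι''(z) 1_{z ≥ 0}] ≤ (1/|b|) √(2/(eπ))`. -/
theorem softplus_second_deriv_gaussian_bound (b w : ℝ) (hb : b ≠ 0) (hw : 0 < w) :
    ∃ ι₀ > 0, ∀ ι ≥ ι₀,
      ∫ z in Set.Ici (0 : ℝ),
          ι * Real.exp (ι * z) / (1 + Real.exp (ι * z)) ^ 2
          ∂(gaussianReal b (Real.toNNReal (w ^ 2)))
        ≤ (1 / |b|) * Real.sqrt (2 / (Real.exp 1 * Real.pi)) := by
  have hw2 : (0:ℝ) < w ^ 2 := by positivity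
  set v : ℝ≥0 := Real.toNNReal (w ^ 2) with hvdef
  have hv0 : v ≠ 0 := by
    simp only [hvdef, ne_eq, Real.toNNReal_eq_zero, not_le]
    exact hw2
  have hvc : (v : ℝ) = w ^ 2 := Real.coe_toNNReal _ hw2.le
  set C : ℝ := (Real.sqrt (2 * π * w ^ 2))⁻¹ * Real.exp (-(b ^ 2) / (2 * w ^ 2)) with hCdef
  have hC0 : 0 < C := by
    have hπ := Real.pi_pos
    positivity
  refine ⟨max 1 (2 * b / w ^ 2), lt_of_lt_of_le one_pos (le_max_left _ _), fun ι hι => ?_⟩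
  have hι1 : (1:ℝ) ≤ ι := le_trans (le_max_left _ _) hι
  have hι0 : (0:ℝ) < ι := lt_of_lt_of_le one_pos hι1
  have hιb : 2 * b ≤ ι * w ^ 2 := by
    have := le_trans (le_max_right 1 (2 * b / w ^ 2)) hι
    calc 2 * b = (2 * b / w ^ 2) * w ^ 2 := by field_simp
    _ ≤ ι * w ^ 2 := by nlinarith
  -- rewrite as Lebesgue integral against density
  have hrw : ∫ z in Set.Ici (0:ℝ),
      ι * Real.exp (ι * z) / (1 + Real.exp (ι * z)) ^ 2 ∂(gaussianReal b v)
      = ∫ z in Set.Ici (0:ℝ),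
        gaussianPDFReal b v z * (ι * Real.exp (ι * z) / (1 + Real.exp (ι * z)) ^ 2) := by
    rw [gaussianReal_of_var_ne_zero _ hv0]
    have h1 : (gaussianPDF b v)
        = fun x => ((Real.toNNReal (gaussianPDFReal b v x) : ℝ≥0) : ℝ≥0∞) := rfl
    rw [h1, setIntegral_withDensity_eq_setIntegral_smul
      ((measurable_gaussianPDFReal b v).real_toNNReal) _ measurableSet_Ici]
    refine setIntegral_congr_fun measurableSet_Ici fun z _ => ?_
    simp [NNReal.smul_def, Real.coe_toNNReal _ (gaussianPDFReal_nonneg b v z)]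
  rw [hrw]
  -- the dominating function
  set H : ℝ → ℝ := fun z => C * (ι * Real.exp (-(ι/2) * z)) with hHdef
  have hHint : IntegrableOn H (Set.Ici (0:ℝ)) := by
    rw [integrableOn_Ici_iff_integrableOn_Ioi]
    exact ((exp_neg_integrableOn_Ioi 0 (by linarith : (0:ℝ) < ι/2)).const_mul ι).const_mul C
  -- pointwise bound on Ici 0
  have hbound : ∀ z ∈ Set.Ici (0:ℝ),
      gaussianPDFReal b v z * (ι * Real.exp (ι * z) / (1 + Real.exp (ι * z)) ^ 2) ≤ H z := by
    intro z hz
    have hz0 : (0:ℝ) ≤ z := hz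
    have he : (0:ℝ) < Real.exp (ι * z) := Real.exp_pos _
    have hstep1 : ι * Real.exp (ι * z) / (1 + Real.exp (ι * z)) ^ 2
        ≤ ι * Real.exp (-(ι * z)) := by
      have h2 : ι * Real.exp (ι * z) / (1 + Real.exp (ι * z)) ^ 2
          ≤ ι * Real.exp (ι * z) / (Real.exp (ι * z)) ^ 2 := by
        apply div_le_div_of_nonneg_left (by positivity) (by positivity)
        nlinarith
      have h3 : ι * Real.exp (ι * z) / (Real.exp (ι * z)) ^ 2
          = ι * Real.exp (-(ι * z)) := by
        rw [Real.exp_neg]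
        field_simp
      linarith
    have hP : gaussianPDFReal b v z
        = (Real.sqrt (2 * π * w ^ 2))⁻¹ * Real.exp (-(z - b) ^ 2 / (2 * w ^ 2)) := by
      rw [gaussianPDFReal, hvc]
    have hexp : Real.exp (-(z - b) ^ 2 / (2 * w ^ 2)) * Real.exp (-(ι * z))
        ≤ Real.exp (-(b ^ 2) / (2 * w ^ 2)) * Real.exp (-(ι/2) * z) := by
      rw [← Real.exp_add, ← Real.exp_add]
      apply Real.exp_le_exp.mpr
      have h2w : (0:ℝ) < 2 * w ^ 2 := by positivity
      rw [div_add' _ _ _ h2w.ne', div_add' _ _ _ h2w.ne', div_le_div_iff₀ h2w h2w]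
      nlinarith [mul_nonneg (mul_nonneg hz0 (sub_nonneg.mpr hιb)) hw2.le,
        mul_nonneg (mul_nonneg (sq_nonneg z) hw2.le) hw2.le]
    have hPnn : (0:ℝ) ≤ (Real.sqrt (2 * π * w ^ 2))⁻¹ := by positivity
    calc gaussianPDFReal b v z * (ι * Real.exp (ι * z) / (1 + Real.exp (ι * z)) ^ 2)
        ≤ gaussianPDFReal b v z * (ι * Real.exp (-(ι * z))) := by
          apply mul_le_mul_of_nonneg_left hstep1 (gaussianPDFReal_nonneg b v z)
      _ = (Real.sqrt (2 * π * w ^ 2))⁻¹ * ι *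
            (Real.exp (-(z - b) ^ 2 / (2 * w ^ 2)) * Real.exp (-(ι * z))) := by
          rw [hP]; ring
      _ ≤ (Real.sqrt (2 * π * w ^ 2))⁻¹ * ι *
            (Real.exp (-(b ^ 2) / (2 * w ^ 2)) * Real.exp (-(ι/2) * z)) := by
          apply mul_le_mul_of_nonneg_left hexp (by positivity)
      _ = H z := by rw [hHdef, hCdef]; ring
  -- integrability of LHS
  have hmeas : AEStronglyMeasurable
      (fun z => gaussianPDFReal b v z * (ι * Real.exp (ι * z) / (1 + Real.exp (ι * z)) ^ 2))
      (volume.restrict (Set.Ici (0:ℝ))) := by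
    apply Measurable.aestronglyMeasurable
    apply (measurable_gaussianPDFReal b v).mul
    apply Measurable.div
    · exact measurable_const.mul (Real.measurable_exp.comp (measurable_const.mul measurable_id))
    · exact (measurable_const.add (Real.measurable_exp.comp (measurable_const.mul measurable_id))).pow_const 2
  have hnn : ∀ z ∈ Set.Ici (0:ℝ),
      0 ≤ gaussianPDFReal b v z * (ι * Real.exp (ι * z) / (1 + Real.exp (ι * z)) ^ 2) := by
    intro z hz
    have := gaussianPDFReal_nonneg b v z
    have := (Real.exp_pos (ι * z)).le
    positivity
  have hint : IntegrableOn
      (fun z => gaussianPDFReal b v z * (ι * Real.exp (ι * z) / (1 + Real.exp (ι * z)) ^ 2))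
      (Set.Ici (0:ℝ)) := by
    apply Integrable.mono hHint hmeas
    filter_upwards [ae_restrict_mem measurableSet_Ici] with z hz
    rw [Real.norm_eq_abs, Real.norm_eq_abs, abs_of_nonneg (hnn z hz),
      abs_of_nonneg (le_trans (hnn z hz) (hbound z hz))]
    exact hbound z hz
  have hmono := setIntegral_mono_on hint hHint measurableSet_Ici hbound
  -- compute ∫ H
  have hHval : ∫ z in Set.Ici (0:ℝ), H z = 2 * C := by
    rw [hHdef]
    rw [integral_Ici_eq_integral_Ioi]
    rw [MeasureTheory.integral_const_mul, MeasureTheory.integral_const_mul]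
    have : ∀ z : ℝ, Real.exp (-(ι/2) * z) = (fun x => Real.exp (-x)) ((ι/2) * z) := by
      intro z; simp
    simp_rw [this]
    rw [integral_comp_mul_left_Ioi (fun x => Real.exp (-x)) 0 (by linarith : (0:ℝ) < ι/2)]
    simp only [mul_zero, integral_exp_neg_Ioi, neg_zero, Real.exp_zero, smul_eq_mul]
    field_simp
  rw [hHval] at hmono
  refine le_trans hmono ?_
  -- final constant bound: 2 * C ≤ (1/|b|) * sqrt (2 / (e * π))
  have hπ := Real.pi_pos
  have habs : (0:ℝ) < |b| := abs_pos.mpr hb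
  -- key: |b| * exp(-(b^2)/(2*w^2)) ≤ w * exp (-(1:ℝ)/2)
  have hkey : |b| * Real.exp (-(b ^ 2) / (2 * w ^ 2)) ≤ w * Real.exp (-(1:ℝ)/2) := by
    have hsq : (|b| * Real.exp (-(b ^ 2) / (2 * w ^ 2))) ^ 2 ≤ (w * Real.exp (-(1:ℝ)/2)) ^ 2 := by
      have h1 : Real.exp (-(b ^ 2) / (2 * w ^ 2)) ^ 2 = Real.exp (-(b ^ 2) / w ^ 2) := by
        rw [sq, ← Real.exp_add]
        congr 1
        field_simp
        ring
      have h2 : Real.exp (-(1:ℝ)/2) ^ 2 = Real.exp (-1) := by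
        rw [sq, ← Real.exp_add]; norm_num
      rw [mul_pow, mul_pow, h1, h2, sq_abs]
      have h3 : b ^ 2 / w ^ 2 ≤ Real.exp (b ^ 2 / w ^ 2 - 1) := by
        have := Real.add_one_le_exp (b ^ 2 / w ^ 2 - 1)
        linarith
      have h4 : b ^ 2 * Real.exp (-(b ^ 2) / w ^ 2)
          ≤ (Real.exp (b ^ 2 / w ^ 2 - 1) * w ^ 2) * Real.exp (-(b ^ 2) / w ^ 2) := by
        apply mul_le_mul_of_nonneg_right _ (Real.exp_pos _).le
        calc b ^ 2 = (b ^ 2 / w ^ 2) * w ^ 2 := by field_simp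
        _ ≤ Real.exp (b ^ 2 / w ^ 2 - 1) * w ^ 2 := by nlinarith
      calc b ^ 2 * Real.exp (-(b ^ 2) / w ^ 2)
          ≤ (Real.exp (b ^ 2 / w ^ 2 - 1) * w ^ 2) * Real.exp (-(b ^ 2) / w ^ 2) := h4
        _ = w ^ 2 * (Real.exp (b ^ 2 / w ^ 2 - 1) * Real.exp (-(b ^ 2) / w ^ 2)) := by ring
        _ = w ^ 2 * Real.exp (-1) := by
            rw [← Real.exp_add]
            congr 1
            ring
    have h5 : (0:ℝ) ≤ |b| * Real.exp (-(b ^ 2) / (2 * w ^ 2)) := by positivity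
    have h6 : (0:ℝ) ≤ w * Real.exp (-(1:ℝ)/2) := by positivity
    nlinarith
  -- sqrt identity: sqrt (2/(e*π)) = 2 * exp(-1/2) / sqrt (2*π)
  have hsqrtid : Real.sqrt (2 / (Real.exp 1 * π)) = 2 * Real.exp (-(1:ℝ)/2) / Real.sqrt (2 * π) := by
    have h2π : (0:ℝ) < 2 * π := by linarith
    have hsq2π : Real.sqrt (2 * π) ^ 2 = 2 * π := Real.sq_sqrt h2π.le
    have hexp1 : Real.exp 1 ≠ 0 := (Real.exp_pos 1).ne'
    have : (2:ℝ) / (Real.exp 1 * π) = (2 * Real.exp (-(1:ℝ)/2) / Real.sqrt (2 * π)) ^ 2 := by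
      rw [div_pow, mul_pow, hsq2π]
      have : Real.exp (-(1:ℝ)/2) ^ 2 = (Real.exp 1)⁻¹ := by
        rw [sq, ← Real.exp_add, ← Real.exp_neg]; norm_num
      rw [this]
      field_simp
    rw [this, Real.sqrt_sq (by positivity)]
  rw [hsqrtid]
  -- reduce
  have hsqrt2πw : Real.sqrt (2 * π * w ^ 2) = Real.sqrt (2 * π) * w := by
    rw [Real.sqrt_mul (by positivity), Real.sqrt_sq hw.le]
  rw [hCdef, hsqrt2πw]
  have hs2π : (0:ℝ) < Real.sqrt (2 * π) := Real.sqrt_pos.mpr (by linarith)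
  have l1 : 2 * ((Real.sqrt (2 * π) * w)⁻¹ * Real.exp (-(b ^ 2) / (2 * w ^ 2)))
      = (2 * Real.exp (-(b ^ 2) / (2 * w ^ 2))) / (Real.sqrt (2 * π) * w) := by ring
  have r1 : 1 / |b| * (2 * Real.exp (-(1:ℝ)/2) / Real.sqrt (2 * π))
      = (2 * Real.exp (-(1:ℝ)/2)) / (|b| * Real.sqrt (2 * π)) := by
    field_simp
  rw [l1, r1, div_le_div_iff₀ (by positivity) (by positivity)]
  nlinarith [mul_le_mul_of_nonneg_right hkey (by positivity : (0:ℝ) ≤ 2 * Real.sqrt (2 * π))]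
end

section
/- With the decreasing step sizes η_t = (2(t+t*)+1)/(γ(t+t*+1)²), the weighted sum Σ_{i=0}^{t−1} η_i² Π_{j=i+1}^{t−1} (1 − γη_j) is at most C·η_t/γ for an absolute constant C. -/
open Finset

lemma telescope_sq (c : ℝ) (hc : 0 < c) (a : ℕ) :
    ∀ b : ℕ, a ≤ b →
      ∏ j ∈ Finset.Ico a b, (((j : ℝ) + c) ^ 2 / ((j : ℝ) + c + 1) ^ 2)
        = ((a : ℝ) + c) ^ 2 / ((b : ℝ) + c) ^ 2 := by
  intro b hab
  induction b, hab using Nat.le_induction with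
  | base =>
      rw [Finset.Ico_self, Finset.prod_empty, div_self (by positivity)]
  | succ b hab ih =>
      rw [Finset.prod_Ico_succ_top hab, ih]
      have h1 : ((b : ℝ) + c) ^ 2 ≠ 0 := by positivity
      have h2 : ((b : ℝ) + c + 1) ^ 2 ≠ 0 := by positivity
      push_cast
      field_simp
      ring

/-- For the decreasing step sizes `η_t = (2(t+t*)+1)/(γ(t+t*+1)²)`, the weighted sum
`Σ_{i=0}^{t−1} η_i² Π_{j=i+1}^{t−1} (1 − γ η_j)` is at most `C η_t / γ` for an absolute
constant `C`. -/
theorem stepsize_weighted_sum_bound :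
    ∃ C > 0, ∀ (γ : ℝ), 0 < γ → ∀ (tstar : ℕ), 1 ≤ tstar →
      ∀ (η : ℕ → ℝ),
        (∀ s : ℕ, η s = (2 * ((s : ℝ) + tstar) + 1) / (γ * ((s : ℝ) + tstar + 1) ^ 2)) →
        ∀ t : ℕ,
          ∑ i ∈ Finset.range t, (η i) ^ 2 * ∏ j ∈ Finset.Ico (i + 1) t, (1 - γ * η j)
            ≤ C * η t / γ := by
  refine ⟨8, by norm_num, ?_⟩
  intro γ hγ tstar htstar η hη t
  have hts : (1 : ℝ) ≤ (tstar : ℝ) := by exact_mod_cast htstar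
  have hc : (0 : ℝ) < (tstar : ℝ) := by linarith
  set T : ℝ := (t : ℝ) + tstar with hT
  have hT1 : (1 : ℝ) ≤ T := by
    have : (0 : ℝ) ≤ (t : ℝ) := Nat.cast_nonneg t
    simp only [hT]; linarith
  have hTpos : (0 : ℝ) < T := by linarith
  have hfac : ∀ j : ℕ, 1 - γ * η j = ((j : ℝ) + tstar) ^ 2 / ((j : ℝ) + tstar + 1) ^ 2 := by
    intro j
    have h1 : ((j : ℝ) + tstar + 1) ≠ 0 := by positivity
    rw [hη j]
    field_simp
    ring
  have key : ∀ i ∈ Finset.range t,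
      (η i) ^ 2 * ∏ j ∈ Finset.Ico (i + 1) t, (1 - γ * η j)
        ≤ 4 / (γ ^ 2 * T ^ 2) := by
    intro i hi
    rw [Finset.mem_range] at hi
    have hprod : ∏ j ∈ Finset.Ico (i + 1) t, (1 - γ * η j)
        = ((i : ℝ) + tstar + 1) ^ 2 / T ^ 2 := by
      rw [Finset.prod_congr rfl (fun j _ => hfac j)]
      have h := telescope_sq (tstar : ℝ) hc (i + 1) t hi
      push_cast at h
      rw [h]
      rw [hT]
      ring
    set x : ℝ := (i : ℝ) + tstar with hx
    have hxpos : (0 : ℝ) < x := by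
      have : (0 : ℝ) ≤ (i : ℝ) := Nat.cast_nonneg i
      simp only [hx]; linarith
    rw [hη i, hprod]
    have hle : (2 * x + 1) ^ 2 ≤ 4 * (x + 1) ^ 2 := by nlinarith
    calc ((2 * x + 1) / (γ * (x + 1) ^ 2)) ^ 2 * ((x + 1) ^ 2 / T ^ 2)
        = (2 * x + 1) ^ 2 / (γ ^ 2 * (x + 1) ^ 2 * T ^ 2) := by
          field_simp
      _ ≤ 4 * (x + 1) ^ 2 / (γ ^ 2 * (x + 1) ^ 2 * T ^ 2) := by gcongr
      _ = 4 / (γ ^ 2 * T ^ 2) := by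
          field_simp
  have hsum : ∑ i ∈ Finset.range t, (η i) ^ 2 * ∏ j ∈ Finset.Ico (i + 1) t, (1 - γ * η j)
      ≤ (t : ℝ) * (4 / (γ ^ 2 * T ^ 2)) := by
    calc ∑ i ∈ Finset.range t, (η i) ^ 2 * ∏ j ∈ Finset.Ico (i + 1) t, (1 - γ * η j)
        ≤ ∑ _i ∈ Finset.range t, 4 / (γ ^ 2 * T ^ 2) := Finset.sum_le_sum key
      _ = (t : ℝ) * (4 / (γ ^ 2 * T ^ 2)) := by
          rw [Finset.sum_const, Finset.card_range, nsmul_eq_mul]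
  refine hsum.trans ?_
  rw [hη t]
  have htT : (t : ℝ) ≤ T := by simp only [hT]; linarith
  have h2 : 8 * ((2 * T + 1) / (γ * (T + 1) ^ 2)) / γ = 8 * (2 * T + 1) / (γ ^ 2 * (T + 1) ^ 2) := by
    field_simp
  have h3 : (t : ℝ) * (4 / (γ ^ 2 * T ^ 2)) = 4 * t / (γ ^ 2 * T ^ 2) := by ring
  rw [show ((t : ℝ) + tstar) = T from rfl, h2, h3,
    div_le_div_iff₀ (by positivity) (by positivity)]
  have hg : (0 : ℝ) < γ ^ 2 := by positivity
  have hmain : (t : ℝ) * (T + 1) ^ 2 ≤ 2 * (2 * T + 1) * T ^ 2 := by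
    nlinarith [mul_le_mul_of_nonneg_right htT (sq_nonneg (T + 1)), hT1, sq_nonneg (T - 1)]
  nlinarith [mul_le_mul_of_nonneg_left hmain hg.le, sq_nonneg (γ * T)]
end
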